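/- For the quadratic cost f(θ) = f(θ*) + ½(θ−θ*)ᵀH(θ−θ*) with H symmetric positive definite, there exist Ĥ = diag(λ₁,...,λ_q, ρ*,...,ρ*) with ρ* = (λ_{q+1}+λₙ)/2 and a gradient g such that the full step η = 1 with direction p = Ĥ^{-1}g fails the Armijo condition f(θ − p) ≤ f(θ) − α pᵀg unless α ≤ λₙ/(λ_{q+1} + λₙ). In particular, for any fixed α ∈ (0,1/2), if λₙ/(λ_{q+1}+λₙ) < α then η = 1 is rejected. -/

import Mathlib

open scoped RealInnerProductSpace

/-- Rank-one projection `x ↦ ⟪v, x⟫ • v`. -/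
noncomputable def projCL {n : ℕ} (v : EuclideanSpace ℝ (Fin n)) :
    EuclideanSpace ℝ (Fin n) →L[ℝ] EuclideanSpace ℝ (Fin n) :=
  (innerSL ℝ v).smulRight v

/-- The approximation `Ĥ(ρ,q)` keeping the top `q` eigenpairs and replacing the
remaining eigenvalues by `ρ`. -/
noncomputable def hatH {n : ℕ} (v : OrthonormalBasis (Fin n) ℝ (EuclideanSpace ℝ (Fin n)))
    (lam : Fin n → ℝ) (q : ℕ) (ρ : ℝ) :
    EuclideanSpace ℝ (Fin n) →L[ℝ] EuclideanSpace ℝ (Fin n) :=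
  ∑ k : Fin n, (if (k : ℕ) < q then lam k else ρ) • projCL (v k)

/-- The inverse of `Ĥ(ρ,q)`. -/
noncomputable def hatHinv {n : ℕ} (v : OrthonormalBasis (Fin n) ℝ (EuclideanSpace ℝ (Fin n)))
    (lam : Fin n → ℝ) (q : ℕ) (ρ : ℝ) :
    EuclideanSpace ℝ (Fin n) →L[ℝ] EuclideanSpace ℝ (Fin n) :=
  ∑ k : Fin n, (if (k : ℕ) < q then (lam k)⁻¹ else ρ⁻¹) • projCL (v k)

/-- Iteration matrix `I − η Ĥ(ρ,q)⁻¹ H`. -/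
noncomputable def iterMat {n : ℕ} (H : EuclideanSpace ℝ (Fin n) →L[ℝ] EuclideanSpace ℝ (Fin n))
    (v : OrthonormalBasis (Fin n) ℝ (EuclideanSpace ℝ (Fin n)))
    (lam : Fin n → ℝ) (q : ℕ) (ρ η : ℝ) :
    EuclideanSpace ℝ (Fin n) →L[ℝ] EuclideanSpace ℝ (Fin n) :=
  ContinuousLinearMap.id ℝ _ - η • ((hatHinv v lam q ρ).comp H)

/-- Diagonal operator with entries `lam` in the standard basis of Euclidean space. -/
noncomputable def diagCL {n : ℕ} (lam : Fin n → ℝ) :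
    EuclideanSpace ℝ (Fin n) →L[ℝ] EuclideanSpace ℝ (Fin n) :=
  ∑ k : Fin n, lam k • projCL (EuclideanSpace.basisFun (Fin n) ℝ k)

lemma sum_proj_apply {n : ℕ} (c : Fin n → ℝ) (a : ℝ) (i : Fin n) :
    (∑ k : Fin n, c k • projCL (EuclideanSpace.basisFun (Fin n) ℝ k))
      (a • (EuclideanSpace.basisFun (Fin n) ℝ i : EuclideanSpace ℝ (Fin n)))
      = (a * c i) • (EuclideanSpace.basisFun (Fin n) ℝ i : EuclideanSpace ℝ (Fin n)) := by
  have horth := (EuclideanSpace.basisFun (Fin n) ℝ).orthonormal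
  rw [orthonormal_iff_ite] at horth
  simp only [ContinuousLinearMap.sum_apply, ContinuousLinearMap.smul_apply, projCL,
    ContinuousLinearMap.smulRight_apply, innerSL_apply_apply, inner_smul_right, horth]
  rw [Finset.sum_eq_single i]
  · rw [smul_smul]; simp [mul_comm]
  · intro b _ hb
    simp [if_neg hb]
  · simp

lemma inner_smul_basis {n : ℕ} (a b : ℝ) (i : Fin n) :
    (inner ℝ (a • (EuclideanSpace.basisFun (Fin n) ℝ i : EuclideanSpace ℝ (Fin n)))
      (b • (EuclideanSpace.basisFun (Fin n) ℝ i : EuclideanSpace ℝ (Fin n))) : ℝ) = a * b := by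
  have horth := (EuclideanSpace.basisFun (Fin n) ℝ).orthonormal
  rw [orthonormal_iff_ite] at horth
  rw [real_inner_smul_left, real_inner_smul_right, horth]
  simp [mul_assoc]

theorem stmt17 (n q : ℕ) (hq : q ≤ n) (lam : Fin (n + 1) → ℝ)
    (hmono : ∀ i j : Fin (n + 1), i ≤ j → lam j ≤ lam i)
    (hpos : ∀ i, 0 < lam i) (fstar : ℝ) :
    ∃ θ θstar : EuclideanSpace ℝ (Fin (n + 1)),
      ∀ α : ℝ, 0 < α → α < 1 / 2 →
        (fstar + (1 / 2) *
            (inner ℝ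
              ((θ - hatHinv (EuclideanSpace.basisFun (Fin (n + 1)) ℝ) lam q
                  ((lam ⟨q, Nat.lt_succ_of_le hq⟩ + lam (Fin.last n)) / 2)
                  (diagCL lam (θ - θstar))) - θstar)
              (diagCL lam
                ((θ - hatHinv (EuclideanSpace.basisFun (Fin (n + 1)) ℝ) lam q
                    ((lam ⟨q, Nat.lt_succ_of_le hq⟩ + lam (Fin.last n)) / 2)
                    (diagCL lam (θ - θstar))) - θstar)) : ℝ) ≤
          (fstar + (1 / 2) * (inner ℝ (θ - θstar) (diagCL lam (θ - θstar)) : ℝ)) -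
            α * (inner ℝ
              (hatHinv (EuclideanSpace.basisFun (Fin (n + 1)) ℝ) lam q
                ((lam ⟨q, Nat.lt_succ_of_le hq⟩ + lam (Fin.last n)) / 2)
                (diagCL lam (θ - θstar)))
              (diagCL lam (θ - θstar)) : ℝ)) →
          α ≤ lam (Fin.last n) / (lam ⟨q, Nat.lt_succ_of_le hq⟩ + lam (Fin.last n)) := by
  set i : Fin (n + 1) := ⟨q, Nat.lt_succ_of_le hq⟩ with hi
  set e : EuclideanSpace ℝ (Fin (n + 1)) := EuclideanSpace.basisFun (Fin (n + 1)) ℝ i with he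
  set L : ℝ := lam i with hL
  set M : ℝ := lam (Fin.last n) with hM
  set ρ : ℝ := (L + M) / 2 with hρ
  have hLpos : 0 < L := hpos i
  have hMpos : 0 < M := hpos _
  have hLM : 0 < L + M := by linarith
  refine ⟨(1 : ℝ) • e, 0, ?_⟩
  intro α hα _ h
  -- compute everything
  have hsub : (1 : ℝ) • e - (0 : EuclideanSpace ℝ (Fin (n + 1))) = (1 : ℝ) • e := sub_zero _
  have hg : diagCL lam ((1 : ℝ) • e) = (1 * L) • e := sum_proj_apply _ 1 i
  have hp : hatHinv (EuclideanSpace.basisFun (Fin (n + 1)) ℝ) lam q ρ ((1 * L) • e)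
      = ((1 * L) * ρ⁻¹) • e := by
    have h1 := sum_proj_apply (fun k : Fin (n + 1) => if (k : ℕ) < q then (lam k)⁻¹ else ρ⁻¹)
      (1 * L) i
    have hni : ¬((i : ℕ) < q) := by simp [hi]
    rw [if_neg hni] at h1
    exact h1
  have hdiff : (1 : ℝ) • e - ((1 * L) * ρ⁻¹) • e - (0 : EuclideanSpace ℝ (Fin (n + 1)))
      = (1 - 1 * L * ρ⁻¹) • e := by
    rw [sub_zero, ← sub_smul]
  have hg2 : diagCL lam ((1 - 1 * L * ρ⁻¹) • e) = ((1 - 1 * L * ρ⁻¹) * L) • e :=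
    sum_proj_apply _ _ i
  rw [hsub, hg, hp, hdiff, hg2, inner_smul_basis, inner_smul_basis, inner_smul_basis] at h
  have hρinv : ρ⁻¹ = 2 / (L + M) := by rw [hρ, inv_div]
  rw [hρinv] at h
  rw [le_div_iff₀ hLM]
  have h' : (1/2 : ℝ) * ((1 - L * (2/(L+M))) * ((1 - L * (2/(L+M))) * L))
      ≤ (1/2) * (1 * L) - α * (L * (2/(L+M)) * (1 * L)) := by linarith [h]
  have hne : L + M ≠ 0 := ne_of_gt hLM
  field_simp at h'
  nlinarith [h', mul_pos (mul_pos hLpos hLpos) hLM, mul_pos hLpos hLM,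
    mul_pos hLpos hMpos]
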